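/- Let u ≤ w and x ≤ y in Bruhat order on S_n, and suppose there is z ∈ S_k × S_{n−k} such that x = uz and y = wz and both factorizations are length-additive, i.e. ℓ(uz) = ℓ(u) + ℓ(z) and ℓ(wz) = ℓ(w) + ℓ(z). Then u ≤_k w if and only if x ≤_k y. -/

import Mathlib

/-- The number of inversions of a permutation of Fin n (positions 0,…,n−1
correspond to 1,…,n). -/
def len (n : ℕ) (w : Equiv.Perm (Fin n)) : ℕ :=
  ((Finset.univ : Finset (Fin n × Fin n)).filter fun p => p.1 < p.2 ∧ w p.2 < w p.1).card

/-- The Bruhat order on S_n: generated by u < u·(a b) when the length increases. -/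
def bruhatLE (n : ℕ) (u w : Equiv.Perm (Fin n)) : Prop :=
  Relation.ReflTransGen
    (fun x y => (∃ a b : Fin n, y = x * Equiv.swap a b) ∧ len n x < len n y) u w

/-- A Bruhat cover: u < w and ℓ(w) = ℓ(u) + 1. -/
def bruhatCover (n : ℕ) (u w : Equiv.Perm (Fin n)) : Prop :=
  bruhatLE n u w ∧ u ≠ w ∧ len n w = len n u + 1

/-- σ_k(w) = w([k]) = {w(1),…,w(k)} (0-based: image of {i | i < k}). -/
def sigmaSet (n k : ℕ) (w : Equiv.Perm (Fin n)) : Finset (Fin n) :=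
  (Finset.univ.filter fun i : Fin n => (i : ℕ) < k).image w

/-- A k-cover: a Bruhat cover with u([k]) ≠ w([k]). -/
def kCover (n k : ℕ) (u w : Equiv.Perm (Fin n)) : Prop :=
  bruhatCover n u w ∧ sigmaSet n k u ≠ sigmaSet n k w

/-- The k-Bruhat order: generated by k-covers. -/
def kBruhatLE (n k : ℕ) (u w : Equiv.Perm (Fin n)) : Prop :=
  Relation.ReflTransGen (kCover n k) u w

/-- Grassmannian permutation: increasing on the first k and on the last n−k positions. -/
def IsGrassmannian (n k : ℕ) (w : Equiv.Perm (Fin n)) : Prop :=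
  ∀ i j : Fin n, i < j → ((j : ℕ) < k ∨ k ≤ (i : ℕ)) → w i < w j

/-- Anti-Grassmannian permutation: decreasing on the first k and on the last n−k positions. -/
def IsAntiGrassmannian (n k : ℕ) (w : Equiv.Perm (Fin n)) : Prop :=
  ∀ i j : Fin n, i < j → ((j : ℕ) < k ∨ k ≤ (i : ℕ)) → w j < w i

/-- Membership in the parabolic subgroup S_k × S_{n−k}: z maps [k] to [k]. -/
def InParabolic (n k : ℕ) (z : Equiv.Perm (Fin n)) : Prop :=
  ∀ i : Fin n, ((i : ℕ) < k ↔ (z i : ℕ) < k)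

namespace Stmt6
open Finset Equiv

variable {n k : ℕ}

def invSet (n : ℕ) (w : Equiv.Perm (Fin n)) : Finset (Fin n × Fin n) :=
  (Finset.univ : Finset (Fin n × Fin n)).filter fun p => p.1 < p.2 ∧ w p.2 < w p.1

lemma len_eq (w : Equiv.Perm (Fin n)) : len n w = (invSet n w).card := rfl

lemma mem_invSet {w : Equiv.Perm (Fin n)} {p : Fin n × Fin n} :
    p ∈ invSet n w ↔ p.1 < p.2 ∧ w p.2 < w p.1 := by simp [invSet]

lemma len_inv (w : Equiv.Perm (Fin n)) : len n w⁻¹ = len n w := by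
  rw [len_eq, len_eq]
  apply Finset.card_bij (fun p _ => ((w⁻¹ p.2 : Fin n), w⁻¹ p.1))
  · rintro ⟨p, q⟩ hp
    rw [mem_invSet] at hp ⊢
    simp only
    refine ⟨hp.2, by simpa using hp.1⟩
  · rintro ⟨p, q⟩ hp ⟨p', q'⟩ hp' h
    simp only [Prod.mk.injEq] at h
    have := (Equiv.injective w⁻¹) h.1
    have := (Equiv.injective w⁻¹) h.2
    simp [Prod.ext_iff, *]
  · rintro ⟨p, q⟩ hp
    rw [mem_invSet] at hp
    refine ⟨(w q, w p), ?_, ?_⟩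
    · rw [mem_invSet]; exact ⟨hp.2, by simpa using hp.1⟩
    · simp

lemma card_mul_eq (v z : Equiv.Perm (Fin n)) :
    (invSet n (v * z)).card
      = ((invSet n v \ invSet n z⁻¹) ∪ (invSet n z⁻¹ \ invSet n v)).card := by
  apply Finset.card_bij
    (fun p _ => if z p.1 < z p.2 then ((z p.1 : Fin n), z p.2) else (z p.2, z p.1))
  · rintro ⟨i, j⟩ hp
    rw [mem_invSet] at hp
    obtain ⟨hij, hv⟩ := hp
    simp only [Equiv.Perm.mul_apply] at hv
    rcases lt_or_gt_of_ne (fun h => (Equiv.injective z h ▸ hij).false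
        : z (i, j).1 ≠ z (i, j).2) with hlt | hgt
    · simp only [hlt, if_pos]
      apply Finset.mem_union_left
      rw [Finset.mem_sdiff, mem_invSet, mem_invSet]
      exact ⟨⟨hlt, hv⟩, by simp [not_lt, le_of_lt hij]⟩
    · simp only [not_lt_of_gt hgt, if_neg, not_false_iff]
      apply Finset.mem_union_right
      rw [Finset.mem_sdiff, mem_invSet, mem_invSet]
      exact ⟨⟨hgt, by simpa using hij⟩, by simp [not_lt, le_of_lt hv]⟩
  · rintro ⟨i, j⟩ hp ⟨i', j'⟩ hp' h
    rw [mem_invSet] at hp hp'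
    split_ifs at h with h1 h2 h2 <;>
      simp only [Prod.mk.injEq] at h <;>
      obtain ⟨ha, hb⟩ := h <;>
      have ha := Equiv.injective z ha <;>
      have hb := Equiv.injective z hb <;>
      subst ha <;> subst hb <;>
      first
        | rfl
        | (exact absurd hp.1 (asymm hp'.1))
  · rintro ⟨p, q⟩ hpq
    rcases Finset.mem_union.1 hpq with h | h <;>
      rw [Finset.mem_sdiff, mem_invSet, mem_invSet] at h
    · -- p<q, v q < v p, not (z⁻¹ q < z⁻¹ p)
      obtain ⟨⟨hpq', hv⟩, hnz⟩ := h
      push_neg at hnz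
      have hne : (z⁻¹ p : Fin n) ≠ z⁻¹ q := fun h => (Equiv.injective z⁻¹ h ▸ hpq').false
      have hzz : (z⁻¹ p : Fin n) < z⁻¹ q := lt_of_le_of_ne (hnz hpq') hne
      refine ⟨(z⁻¹ p, z⁻¹ q), ?_, ?_⟩
      · rw [mem_invSet]; exact ⟨hzz, by simpa using hv⟩
      · simp only [Equiv.Perm.coe_inv, Equiv.apply_symm_apply]
        rw [if_pos hpq']
    · obtain ⟨⟨hpq', hz'⟩, hnv⟩ := h
      push_neg at hnv
      have hne : (v q : Fin n) ≠ v p := fun h => (Equiv.injective v h ▸ hpq').false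
      refine ⟨(z⁻¹ q, z⁻¹ p), ?_, ?_⟩
      · rw [mem_invSet]
        refine ⟨hz', ?_⟩
        simp only [Equiv.Perm.mul_apply, Equiv.Perm.coe_inv, Equiv.apply_symm_apply]
        exact lt_of_le_of_ne (hnv hpq') (fun h => hne (by simpa using h.symm))
      · simp only [Equiv.Perm.coe_inv, Equiv.apply_symm_apply]
        rw [if_neg (asymm hpq')]

lemma key (v z : Equiv.Perm (Fin n)) :
    len n (v * z) + 2 * (invSet n v ∩ invSet n z⁻¹).card = len n v + len n z := by
  have h1 := card_mul_eq v z
  have hdisj : Disjoint (invSet n v \ invSet n z⁻¹) (invSet n z⁻¹ \ invSet n v) :=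
    Finset.disjoint_left.2 fun a ha hb => (Finset.mem_sdiff.1 hb).2 (Finset.mem_sdiff.1 ha).1
  rw [Finset.card_union_of_disjoint hdisj] at h1
  have h2 := Finset.card_sdiff_add_card_inter (invSet n v) (invSet n z⁻¹)
  have h3 := Finset.card_sdiff_add_card_inter (invSet n z⁻¹) (invSet n v)
  rw [Finset.inter_comm] at h3
  have h4 : len n z = (invSet n z⁻¹).card := (len_inv z).symm ▸ (len_eq z⁻¹ ▸ rfl)
  rw [len_eq, len_eq, h4, h1]
  omega

lemma mem_invSet_swap {a b p q : Fin n} (hab : a < b) :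
    (p, q) ∈ invSet n (Equiv.swap a b) ↔
      p < q ∧ ((p = a ∧ q ≤ b) ∨ (q = b ∧ a ≤ p)) := by
  rw [mem_invSet]
  simp only [Equiv.swap_apply_def]
  constructor
  · rintro ⟨hpq, hs⟩
    refine ⟨hpq, ?_⟩
    split_ifs at hs <;>
      (simp only [Fin.lt_def, Fin.le_def, Fin.ext_iff, not_and, not_le, not_lt] at *; omega)
  · rintro ⟨hpq, h⟩
    refine ⟨hpq, ?_⟩
    split_ifs <;>
      (simp only [Fin.lt_def, Fin.le_def, Fin.ext_iff, not_and, not_le, not_lt] at *; omega)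

lemma swap_inter_struct {a b : Fin n} (v : Equiv.Perm (Fin n)) (hab : a < b)
    (hvab : v a < v b) : ∀ p q : Fin n,
    (p, q) ∈ invSet n v ∩ invSet n (Equiv.swap a b) →
      (p = a ∧ q ∈ Finset.Ioo a b ∧ v q < v a) ∨ (q = b ∧ p ∈ Finset.Ioo a b ∧ v b < v p) := by
  intro p q hp
  rw [Finset.mem_inter, mem_invSet, mem_invSet_swap hab] at hp
  obtain ⟨⟨hpq, hv⟩, -, h⟩ := hp
  simp only at hpq hv
  rcases h with ⟨hpa, hqb⟩ | ⟨hqb, hap⟩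
  · refine Or.inl ⟨hpa, Finset.mem_Ioo.2 ⟨hpa ▸ hpq, lt_of_le_of_ne hqb ?_⟩, hpa ▸ hv⟩
    rintro rfl
    rw [hpa] at hv
    exact absurd hvab (not_lt_of_gt hv)
  · refine Or.inr ⟨hqb, Finset.mem_Ioo.2 ⟨lt_of_le_of_ne hap ?_, hqb ▸ hpq⟩, hqb ▸ hv⟩
    rintro rfl
    rw [hqb] at hv
    exact absurd hvab (not_lt_of_gt hv)

lemma swap_inter_maps {a b : Fin n} (v : Equiv.Perm (Fin n)) (hab : a < b)
    (hvab : v a < v b) :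
    ∀ p ∈ invSet n v ∩ invSet n (Equiv.swap a b),
      (if p.1 = a then p.2 else p.1) ∈ Finset.Ioo a b := by
  rintro ⟨p, q⟩ hp
  rcases swap_inter_struct v hab hvab p q hp with ⟨hpa, hq, -⟩ | ⟨hqb, hp', -⟩
  · simpa [hpa] using hq
  · have hpa : p ≠ a := fun h => by
      simp only [Finset.mem_Ioo, h] at hp'
      exact absurd hp'.1 (lt_irrefl _)
    simpa [hpa] using hp'

lemma swap_inter_inj {a b : Fin n} (v : Equiv.Perm (Fin n)) (hab : a < b)
    (hvab : v a < v b) :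
    ∀ p ∈ invSet n v ∩ invSet n (Equiv.swap a b),
    ∀ p' ∈ invSet n v ∩ invSet n (Equiv.swap a b),
      (if p.1 = a then p.2 else p.1) = (if p'.1 = a then p'.2 else p'.1) → p = p' := by
  rintro ⟨p, q⟩ hp ⟨p', q'⟩ hp' h
  have hp0 := swap_inter_struct v hab hvab p q hp
  have hp0' := swap_inter_struct v hab hvab p' q' hp'
  simp only at h
  rcases hp0 with ⟨hpa, hq, hv⟩ | ⟨hqb, hpp, hv⟩ <;>
    rcases hp0' with ⟨hpa', hq', hv'⟩ | ⟨hqb', hpp', hv'⟩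
  · rw [if_pos hpa, if_pos hpa'] at h
    simp [Prod.ext_iff, hpa, hpa', h]
  · have : p' ≠ a := fun hc => by
      rw [hc] at hv'; exact absurd hvab (not_lt_of_gt hv')
    rw [if_pos hpa, if_neg this] at h
    rw [h] at hv
    exact absurd (hv.trans (hvab.trans hv')) (lt_irrefl _)
  · have : p ≠ a := fun hc => by
      rw [hc] at hv; exact absurd hvab (not_lt_of_gt hv)
    rw [if_neg this, if_pos hpa'] at h
    rw [← h] at hv'
    exact absurd (hv'.trans (hvab.trans hv)) (lt_irrefl _)
  · have h1 : p ≠ a := fun hc => by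
      rw [hc] at hv; exact absurd hvab (not_lt_of_gt hv)
    have h2 : p' ≠ a := fun hc => by
      rw [hc] at hv'; exact absurd hvab (not_lt_of_gt hv')
    rw [if_neg h1, if_neg h2] at h
    simp [Prod.ext_iff, hqb, hqb', h]

lemma inter_card_le {a b : Fin n} (v : Equiv.Perm (Fin n)) (hab : a < b)
    (hvab : v a < v b) :
    ((invSet n v ∩ invSet n (Equiv.swap a b)).card ≤ (Finset.Ioo a b).card) :=
  Finset.card_le_card_of_injOn (fun p => if p.1 = a then p.2 else p.1)
    (swap_inter_maps v hab hvab)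
    (fun p hp p' hp' h => swap_inter_inj v hab hvab p (by simpa using hp) p'
      (by simpa using hp') h)

lemma len_swap {a b : Fin n} (hab : a < b) :
    len n (Equiv.swap a b) = 2 * (Finset.Ioo a b).card + 1 := by
  have hset : invSet n (Equiv.swap a b)
      = ((Finset.Ioc a b).image fun q : Fin n => (a, q))
        ∪ ((Finset.Ioo a b).image fun p : Fin n => (p, b)) := by
    ext ⟨p, q⟩
    rw [mem_invSet_swap hab]
    simp only [Finset.mem_union, Finset.mem_image, Finset.mem_Ioc, Finset.mem_Ioo,
      Prod.mk.injEq]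
    constructor
    · rintro ⟨hpq, ⟨hpa, hqb⟩ | ⟨hqb, hap⟩⟩
      · exact Or.inl ⟨q, ⟨hpa ▸ hpq, hqb⟩, hpa.symm, rfl⟩
      · rcases eq_or_ne p a with hpa | hpa
        · exact Or.inl ⟨q, ⟨hpa ▸ hpq, hqb ▸ le_refl _⟩, hpa.symm, rfl⟩
        · exact Or.inr ⟨p, ⟨lt_of_le_of_ne hap (Ne.symm hpa), hqb ▸ hpq⟩, rfl, hqb.symm⟩
    · rintro (⟨c, ⟨hc1, hc2⟩, h1, h2⟩ | ⟨c, ⟨hc1, hc2⟩, h1, h2⟩)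
      · exact ⟨h1 ▸ h2 ▸ hc1, Or.inl ⟨h1.symm, h2 ▸ hc2⟩⟩
      · exact ⟨h1 ▸ h2 ▸ hc2, Or.inr ⟨h2.symm, h1 ▸ le_of_lt hc1⟩⟩
  have hdisj : Disjoint ((Finset.Ioc a b).image fun q : Fin n => (a, q))
      ((Finset.Ioo a b).image fun p : Fin n => (p, b)) := by
    rw [Finset.disjoint_left]
    rintro ⟨p, q⟩ hp hq
    simp only [Finset.mem_image, Finset.mem_Ioc, Finset.mem_Ioo, Prod.mk.injEq] at hp hq
    obtain ⟨c, ⟨hc1, -⟩, h1, -⟩ := hp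
    obtain ⟨c', ⟨hc1', -⟩, h1', -⟩ := hq
    rw [h1'] at hc1'
    rw [← h1] at hc1'
    exact absurd hc1' (lt_irrefl _)
  rw [len_eq, hset, Finset.card_union_of_disjoint hdisj,
    Finset.card_image_of_injective _ (fun x y h => by simpa using h),
    Finset.card_image_of_injective _ (fun x y h => by simpa using h)]
  have : Finset.Ioc a b = insert b (Finset.Ioo a b) := (Finset.Ioo_insert_right hab).symm
  rw [this, Finset.card_insert_of_notMem (by simp)]
  ring

lemma cover_struct {a b : Fin n} (v : Equiv.Perm (Fin n)) (hab : a < b)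
    (hlen : len n (v * Equiv.swap a b) = len n v + 1) :
    v a < v b ∧ ∀ c : Fin n, a < c → c < b → ¬(v a < v c ∧ v c < v b) := by
  have hswapinv : (Equiv.swap a b)⁻¹ = Equiv.swap a b := Equiv.swap_inv a b
  have hls := len_swap (n := n) hab
  have hvab : v a < v b := by
    by_contra hcon
    have hne : v a ≠ v b := fun h => absurd (Equiv.injective v h) (ne_of_lt hab)
    have hlt : v b < v a := lt_of_le_of_ne (not_lt.1 hcon) (Ne.symm (by exact hne))
    set v' := v * Equiv.swap a b with hv'
    have hva' : v' a < v' b := by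
      simp only [hv', Equiv.Perm.mul_apply, Equiv.swap_apply_left, Equiv.swap_apply_right]
      exact hlt
    have hkey := key v' (Equiv.swap a b)
    rw [hswapinv] at hkey
    have hvv : v' * Equiv.swap a b = v := by
      rw [hv', mul_assoc, Equiv.swap_mul_self, mul_one]
    rw [hvv, hls, hlen] at hkey
    have := inter_card_le v' hab hva'
    omega
  refine ⟨hvab, ?_⟩
  have hkey := key v (Equiv.swap a b)
  rw [hswapinv, hls, hlen] at hkey
  have hcard : (Finset.Ioo a b).card ≤ (invSet n v ∩ invSet n (Equiv.swap a b)).card := by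
    omega
  have hsurj := Finset.surj_on_of_inj_on_of_card_le
    (fun p (_ : p ∈ invSet n v ∩ invSet n (Equiv.swap a b)) => if p.1 = a then p.2 else p.1)
    (fun p hp => swap_inter_maps v hab hvab p hp)
    (fun p p' hp hp' h => swap_inter_inj v hab hvab p hp p' hp' h)
    hcard
  intro c hac hcb ⟨h1, h2⟩
  obtain ⟨⟨p, q⟩, hmem, hc⟩ := hsurj c (Finset.mem_Ioo.2 ⟨hac, hcb⟩)
  rcases swap_inter_struct v hab hvab p q hmem with ⟨hpa, hq, hv⟩ | ⟨hqb, hpp, hv⟩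
  · simp only [if_pos hpa] at hc
    rw [hc] at h1
    exact absurd (h1.trans hv) (lt_irrefl _)
  · have hpa : p ≠ a := by
      intro h
      rw [h] at hpp
      simp only [Finset.mem_Ioo] at hpp
      exact absurd hpp.1 (lt_irrefl _)
    simp only [if_neg hpa] at hc
    rw [hc] at h2
    exact absurd (h2.trans hv) (lt_irrefl _)

lemma len_le_of_bruhatLE {v w : Equiv.Perm (Fin n)} (h : bruhatLE n v w) :
    len n v ≤ len n w := by
  induction h with
  | refl => exact le_refl _
  | tail _ hstep ih => exact ih.trans (le_of_lt hstep.2)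

lemma eq_of_bruhatLE_len {v w : Equiv.Perm (Fin n)} (h : bruhatLE n v w)
    (hl : len n w ≤ len n v) : v = w := by
  induction h using Relation.ReflTransGen.head_induction_on with
  | refl => rfl
  | head hstep h2 _ =>
    exact absurd (lt_of_lt_of_le (lt_of_lt_of_le hstep.2 (len_le_of_bruhatLE h2)) hl)
      (lt_irrefl _)

lemma cover_decomp {v w : Equiv.Perm (Fin n)} (h : bruhatCover n v w) :
    ∃ a b : Fin n, a < b ∧ w = v * Equiv.swap a b := by
  obtain ⟨hle, hne, hlen⟩ := h
  rcases Relation.ReflTransGen.cases_head hle with rfl | ⟨m, hstep, hm⟩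
  · exact absurd rfl hne
  · have hmw : m = w := by
      apply eq_of_bruhatLE_len hm
      have := hstep.2
      omega
    subst hmw
    obtain ⟨⟨a, b, hab⟩, hlt⟩ := hstep
    have hne' : a ≠ b := by
      rintro rfl
      have hva : v * Equiv.swap a a = v := by
        ext i
        simp [Equiv.swap_self]
      rw [hva] at hab
      rw [hab] at hlt
      exact absurd hlt (lt_irrefl _)
    rcases lt_or_gt_of_ne hne' with h' | h'
    · exact ⟨a, b, h', hab⟩
    · exact ⟨b, a, h', by rw [Equiv.swap_comm]; exact hab⟩

lemma inParabolic_inv {z : Equiv.Perm (Fin n)} (hz : InParabolic n k z) :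
    InParabolic n k z⁻¹ := by
  intro i
  have := hz (z⁻¹ i)
  simp only [Equiv.Perm.coe_inv, Equiv.apply_symm_apply] at this
  exact this.symm

lemma invSet_block {z : Equiv.Perm (Fin n)} (hz : InParabolic n k z) {p q : Fin n}
    (h : (p, q) ∈ invSet n z) : (q : ℕ) < k ∨ k ≤ (p : ℕ) := by
  rw [mem_invSet] at h
  by_contra hc
  push_neg at hc
  obtain ⟨h1, h2⟩ := hc
  have hp := (hz p).1 h2
  have hq : k ≤ (z q : ℕ) := le_of_not_gt (fun hk => absurd ((hz q).2 hk) (not_lt.2 h1))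
  have h3 := h.2
  rw [Fin.lt_def] at h3
  simp only at h3
  omega

lemma image_parab {z : Equiv.Perm (Fin n)} (hz : InParabolic n k z) :
    (Finset.univ.filter fun i : Fin n => (i : ℕ) < k).image z
      = Finset.univ.filter fun i : Fin n => (i : ℕ) < k := by
  apply Finset.eq_of_subset_of_card_le
  · intro x hx
    simp only [Finset.mem_image, Finset.mem_filter, Finset.mem_univ, true_and] at hx ⊢
    obtain ⟨i, hi, rfl⟩ := hx
    exact (hz i).1 hi
  · rw [Finset.card_image_of_injective _ (Equiv.injective z)]

lemma sigmaSet_mul {v z : Equiv.Perm (Fin n)} (hz : InParabolic n k z) :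
    sigmaSet n k (v * z) = sigmaSet n k v := by
  unfold sigmaSet
  rw [show ⇑(v * z) = ⇑v ∘ ⇑z from rfl, ← Finset.image_image, image_parab hz]

lemma kCover_struct {v w : Equiv.Perm (Fin n)} (h : kCover n k v w) :
    ∃ a b : Fin n, a < b ∧ (a : ℕ) < k ∧ k ≤ (b : ℕ) ∧ w = v * Equiv.swap a b ∧
      len n w = len n v + 1 ∧ v a < v b ∧
      ∀ c : Fin n, a < c → c < b → ¬(v a < v c ∧ v c < v b) := by
  obtain ⟨hbc, hsig⟩ := h
  obtain ⟨a, b, hab, hw⟩ := cover_decomp hbc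
  have hlen : len n (v * Equiv.swap a b) = len n v + 1 := by rw [← hw]; exact hbc.2.2
  have hcross : (a : ℕ) < k ∧ k ≤ (b : ℕ) := by
    by_contra hc
    have hab' : (a : ℕ) < b := by rwa [Fin.lt_def] at hab
    have hside : ((a : ℕ) < k ∧ (b : ℕ) < k) ∨ (k ≤ (a : ℕ) ∧ k ≤ (b : ℕ)) := by
      rcases Nat.lt_or_ge (a : ℕ) k with h1 | h1 <;>
        rcases Nat.lt_or_ge (b : ℕ) k with h2 | h2
      · exact Or.inl ⟨h1, h2⟩
      · exact absurd ⟨h1, h2⟩ hc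
      · exact absurd hab' (by omega)
      · exact Or.inr ⟨h1, h2⟩
    have hpar : InParabolic n k (Equiv.swap a b) := by
      intro i
      by_cases h1 : i = a
      · rw [h1, Equiv.swap_apply_left]
        rcases hside with ⟨ha, hb⟩ | ⟨ha, hb⟩ <;> (constructor <;> intro <;> omega)
      by_cases h2 : i = b
      · rw [h2, Equiv.swap_apply_right]
        rcases hside with ⟨ha, hb⟩ | ⟨ha, hb⟩ <;> (constructor <;> intro <;> omega)
      rw [Equiv.swap_apply_of_ne_of_ne h1 h2]
    exact hsig (by rw [hw, sigmaSet_mul hpar])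
  obtain ⟨hvab, hmid⟩ := cover_struct v hab hlen
  exact ⟨a, b, hab, hcross.1, hcross.2, hw, hbc.2.2, hvab, hmid⟩

lemma invP_mono_cover {v w : Equiv.Perm (Fin n)} (h : kCover n k v w) {p q : Fin n}
    (hmem : (p, q) ∈ invSet n w) (hblock : (q : ℕ) < k ∨ k ≤ (p : ℕ)) :
    (p, q) ∈ invSet n v := by
  obtain ⟨a, b, hab, hak, hbk, hw, hlen, hvab, hmid⟩ := kCover_struct h
  rw [mem_invSet] at hmem ⊢
  obtain ⟨hpq, hvw⟩ := hmem
  refine ⟨hpq, ?_⟩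
  simp only at hpq hvw ⊢
  rw [hw] at hvw
  simp only [Equiv.Perm.mul_apply] at hvw
  have hpq' : (p : ℕ) < q := by rwa [Fin.lt_def] at hpq
  have hab' : (a : ℕ) < b := by rwa [Fin.lt_def] at hab
  by_cases hqa : q = a
  · -- p < q = a < b : swap q = b, swap p = p (p < a so p ≠ a, p ≠ b)
    have hpa : p ≠ a := fun hh => by rw [hh, hqa] at hpq'; omega
    have hpb : p ≠ b := fun hh => by
      rw [Fin.ext_iff] at hh hqa; omega
    rw [hqa, Equiv.swap_apply_left, Equiv.swap_apply_of_ne_of_ne hpa hpb] at hvw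
    -- hvw : v b < v p ; goal : v q < v p, q = a, v a < v b
    rw [hqa]
    exact hvab.trans hvw
  by_cases hqb : q = b
  · -- q = b : block gives k ≤ p, so p ≠ a, a < p < b (p < q = b)
    have hpb : p ≠ b := ne_of_lt (hqb ▸ hpq)
    have hkp : k ≤ (p : ℕ) := by
      rcases hblock with hh | hh
      · rw [Fin.ext_iff] at hqb; omega
      · exact hh
    have hpa : p ≠ a := fun hh => by rw [Fin.ext_iff] at hh; omega
    rw [hqb, Equiv.swap_apply_right, Equiv.swap_apply_of_ne_of_ne hpa hpb] at hvw
    -- hvw : v a < v p ; goal : v b < v p ; a < p < b : middle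
    have hap : a < p := by
      rw [Fin.lt_def]
      have hne : (p : ℕ) ≠ (a : ℕ) := fun hh => hpa (Fin.ext hh)
      omega
    have hpb' : p < b := hqb ▸ hpq
    have := hmid p hap hpb'
    rw [hqb]
    rcases lt_trichotomy (v p) (v b) with hh | hh | hh
    · exact absurd ⟨hvw, hh⟩ this
    · exact absurd (Equiv.injective v hh) hpb
    · exact hh
  by_cases hpa : p = a
  · -- p = a, q ≠ a, q ≠ b : swap p = b, swap q = q : hvw : v q < v b
    rw [hpa, Equiv.swap_apply_left, Equiv.swap_apply_of_ne_of_ne hqa hqb] at hvw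
    -- block: p = a < k so need q < k ≤ b, so q < b, and a = p < q : middle
    have hqk : (q : ℕ) < k := by
      rcases hblock with hh | hh
      · exact hh
      · rw [Fin.ext_iff] at hpa; omega
    have haq : a < q := hpa ▸ hpq
    have hqb' : q < b := by rw [Fin.lt_def]; omega
    have := hmid q haq hqb'
    rw [hpa]
    rcases lt_trichotomy (v a) (v q) with hh | hh | hh
    · exact absurd ⟨hh, hvw⟩ this
    · exact absurd (Equiv.injective v hh.symm) hqa
    · exact hh
  by_cases hpb : p = b
  · -- p = b, q > b : swap p = a, swap q = q : hvw : v q < v a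
    rw [hpb, Equiv.swap_apply_right, Equiv.swap_apply_of_ne_of_ne hqa hqb] at hvw
    rw [hpb]
    exact hvw.trans hvab
  · rw [Equiv.swap_apply_of_ne_of_ne hpa hpb,
      Equiv.swap_apply_of_ne_of_ne hqa hqb] at hvw
    exact hvw

lemma invP_mono {v w : Equiv.Perm (Fin n)} (h : kBruhatLE n k v w) :
    ∀ p q : Fin n, (p, q) ∈ invSet n w → ((q : ℕ) < k ∨ k ≤ (p : ℕ)) →
      (p, q) ∈ invSet n v := by
  induction h with
  | refl => exact fun p q hm _ => hm
  | tail _ hc ih => exact fun p q hm hb => ih p q (invP_mono_cover hc hm hb) hb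

lemma kCover_mul {v w t : Equiv.Perm (Fin n)} (hpar : InParabolic n k t)
    (hc : kCover n k v w) (hl : len n (w * t) = len n (v * t) + 1) :
    kCover n k (v * t) (w * t) := by
  obtain ⟨a, b, _, _, _, hw, _, _, _⟩ := kCover_struct hc
  have hswap : w * t = (v * t) * Equiv.swap (t⁻¹ a) (t⁻¹ b) := by
    rw [hw, Equiv.swap_apply_apply t⁻¹ a b]
    group
  refine ⟨⟨Relation.ReflTransGen.single ⟨⟨_, _, hswap⟩, by omega⟩, ?_, hl⟩, ?_⟩
  · intro he
    rw [he] at hl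
    omega
  · rw [sigmaSet_mul hpar, sigmaSet_mul hpar]
    exact hc.2

lemma len_mul_of_empty {v z : Equiv.Perm (Fin n)}
    (hd : invSet n v ∩ invSet n z⁻¹ = ∅) : len n (v * z) = len n v + len n z := by
  have := key v z
  rw [hd] at this
  simpa using this

lemma len_mul_inv_of_subset {v z : Equiv.Perm (Fin n)}
    (hs : invSet n z ⊆ invSet n v) : len n (v * z⁻¹) + len n z = len n v := by
  have hkey := key v z⁻¹
  rw [inv_inv, len_inv, Finset.inter_eq_right.2 hs, ← len_eq] at hkey
  omega

lemma forward_aux {u z : Equiv.Perm (Fin n)} (hz : InParabolic n k z)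
    (hu : invSet n u ∩ invSet n z⁻¹ = ∅) :
    ∀ w : Equiv.Perm (Fin n), kBruhatLE n k u w → kBruhatLE n k (u * z) (w * z) := by
  intro w h
  induction h with
  | refl => exact Relation.ReflTransGen.refl
  | @tail w' w'' h1 hc ih =>
    have hdis : ∀ v : Equiv.Perm (Fin n), kBruhatLE n k u v →
        invSet n v ∩ invSet n z⁻¹ = ∅ := by
      intro v hv
      rw [Finset.eq_empty_iff_forall_notMem]
      rintro ⟨p, q⟩ hm
      rw [Finset.mem_inter] at hm
      have hb := invSet_block (inParabolic_inv hz) hm.2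
      have := invP_mono hv p q hm.1 hb
      rw [Finset.eq_empty_iff_forall_notMem] at hu
      exact hu (p, q) (Finset.mem_inter.2 ⟨this, hm.2⟩)
    have h1' : kBruhatLE n k u w'' := h1.tail hc
    have e1 := len_mul_of_empty (hdis w' h1)
    have e2 := len_mul_of_empty (hdis w'' h1')
    obtain ⟨-, -, -, -, -, -, hlen, -, -⟩ := kCover_struct hc
    exact ih.tail (kCover_mul hz hc (by omega))

lemma reverse_aux {y z : Equiv.Perm (Fin n)} (hz : InParabolic n k z)
    (hy : invSet n z ⊆ invSet n y) :
    ∀ x : Equiv.Perm (Fin n), kBruhatLE n k x y → kBruhatLE n k (x * z⁻¹) (y * z⁻¹) := by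
  intro x h
  have hsub : ∀ v : Equiv.Perm (Fin n), kBruhatLE n k v y → invSet n z ⊆ invSet n v := by
    intro v hv
    rintro ⟨p, q⟩ hm
    exact invP_mono hv p q (hy hm) (invSet_block hz hm)
  induction h using Relation.ReflTransGen.head_induction_on with
  | refl => exact Relation.ReflTransGen.refl
  | @head v v' hc h' ih =>
    have e1 := len_mul_inv_of_subset (hsub v (Relation.ReflTransGen.head hc h'))
    have e2 := len_mul_inv_of_subset (hsub v' h')
    obtain ⟨-, -, -, -, -, -, hlen, -, -⟩ := kCover_struct hc
    exact Relation.ReflTransGen.head (kCover_mul (inParabolic_inv hz) hc (by omega)) ih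

theorem stmt_6' (n k : ℕ) (hk : k ≤ n) (u w x y z : Equiv.Perm (Fin n))
    (hz : InParabolic n k z)
    (hx : x = u * z) (hy : y = w * z)
    (huw : bruhatLE n u w) (hxy : bruhatLE n x y)
    (hadd₁ : len n (u * z) = len n u + len n z)
    (hadd₂ : len n (w * z) = len n w + len n z) :
    kBruhatLE n k u w ↔ kBruhatLE n k x y := by
  constructor
  · intro h
    have hu : invSet n u ∩ invSet n z⁻¹ = ∅ := by
      have hkey := key u z
      rw [hadd₁] at hkey
      have : (invSet n u ∩ invSet n z⁻¹).card = 0 := by omega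
      exact Finset.card_eq_zero.1 this
    rw [hx, hy]
    exact forward_aux hz hu w h
  · intro h
    have hyz : invSet n z ⊆ invSet n y := by
      have hkey := key y z⁻¹
      rw [inv_inv, len_inv] at hkey
      have hyw : y * z⁻¹ = w := by rw [hy, mul_assoc, mul_inv_cancel, mul_one]
      rw [hyw] at hkey
      have hleny : len n y = len n w + len n z := by rw [hy]; exact hadd₂
      rw [hleny] at hkey
      have hle : (invSet n z).card ≤ (invSet n y ∩ invSet n z).card := by
        rw [← len_eq]
        omega
      exact Finset.inter_eq_right.1
        (Finset.eq_of_subset_of_card_le Finset.inter_subset_right hle)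
    have := reverse_aux hz hyz x h
    rw [hx, hy, mul_assoc, mul_assoc, mul_inv_cancel, mul_one, mul_one] at this
    exact this

end Stmt6

theorem stmt_6 (n k : ℕ) (hk : k ≤ n) (u w x y z : Equiv.Perm (Fin n))
    (hz : InParabolic n k z)
    (hx : x = u * z) (hy : y = w * z)
    (huw : bruhatLE n u w) (hxy : bruhatLE n x y)
    (hadd₁ : len n (u * z) = len n u + len n z)
    (hadd₂ : len n (w * z) = len n w + len n z) :
    kBruhatLE n k u w ↔ kBruhatLE n k x y :=
  Stmt6.stmt_6' n k hk u w x y z hz hx hy huw hxy hadd₁ hadd₂
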